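/- For each pair (k, n) ∈ {(5, 6), (6, 7), (7, 8), (7, 9)}, the family consisting of all k-element subsets of {1,…,n} is Non-FC; consequently FC(k, n) is undefined for these pairs (no family of distinct k-element subsets of [n] with universe [n] of any size is guaranteed to be FC). -/
import Mathlib

/-- The universe of a family of finite sets: the union of all its members. -/
def famUniverse (A : Finset (Finset ℕ)) : Finset ℕ := A.sup id

/-- A family is union-closed if it is nonempty and closed under pairwise unions. -/
def UnionClosed (F : Finset (Finset ℕ)) : Prop :=
  F.Nonempty ∧ ∀ A ∈ F, ∀ B ∈ F, A ∪ B ∈ F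

/-- A family `A` is FC (Frankl-Complete) if for every union-closed family `F`
containing `A`, some element of the universe of `A` belongs to at least half
of the members of `F`. -/
def IsFC (A : Finset (Finset ℕ)) : Prop :=
  ∀ F : Finset (Finset ℕ), UnionClosed F → A ⊆ F →
    ∃ x ∈ famUniverse A, F.card ≤ 2 * (F.filter (fun S => x ∈ S)).card

/-- `IsKFamily k n A` means `A` is a family of (distinct) `k`-element subsets of
`[n] = {1, …, n}` whose universe equals `[n]`. -/
def IsKFamily (k n : ℕ) (A : Finset (Finset ℕ)) : Prop :=
  (∀ S ∈ A, S.card = k ∧ S ⊆ Finset.Icc 1 n) ∧ famUniverse A = Finset.Icc 1 n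

/-- The set of positive integers `m` such that every family of `m` distinct
`k`-element subsets of `[n]` with universe `[n]` is FC.  `FC(k, n)` is the least
element of this set, when it exists. -/
def FCwitnesses (k n : ℕ) : Set ℕ :=
  {m : ℕ | 0 < m ∧ ∀ A : Finset (Finset ℕ), A.card = m → IsKFamily k n A → IsFC A}

namespace FCaux

open Finset

/-- fiber family indexed by a marker set `M`. -/
def Gfam (k n : ℕ) (M : Finset ℕ) : Finset (Finset ℕ) :=
  (Finset.Icc 1 n).powerset.filter
    (fun S => 2 ≤ M.card ∨ k ≤ S.card ∨ (1 ≤ M.card ∧ ∀ a ∈ M, a - n ∉ S))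

def markers (n : ℕ) : Finset ℕ := (Finset.Icc 1 n).image (fun y => n + y)

def Ffam (k n : ℕ) : Finset (Finset ℕ) :=
  (markers n).powerset.biUnion (fun M => (Gfam k n M).image (fun S => S ∪ M))

lemma lt_of_mem_markers {n a : ℕ} (h : a ∈ markers n) : n < a := by
  simp only [markers, mem_image, mem_Icc] at h
  obtain ⟨y, hy, rfl⟩ := h; omega

lemma subset_of_mem_Gfam {k n M S} (h : S ∈ Gfam k n M) : S ⊆ Finset.Icc 1 n :=
  mem_powerset.mp (mem_filter.mp h).1

lemma split_left {n : ℕ} {S M : Finset ℕ} (hS : S ⊆ Finset.Icc 1 n) (hM : M ⊆ markers n) :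
    (S ∪ M).filter (fun a => a ≤ n) = S := by
  ext a
  simp only [mem_filter, mem_union]
  constructor
  · rintro ⟨h | h, hle⟩
    · exact h
    · exact absurd hle (not_le.mpr (lt_of_mem_markers (hM h)))
  · intro h
    exact ⟨Or.inl h, (mem_Icc.mp (hS h)).2⟩

lemma split_right {n : ℕ} {S M : Finset ℕ} (hS : S ⊆ Finset.Icc 1 n) (hM : M ⊆ markers n) :
    (S ∪ M).filter (fun a => ¬ a ≤ n) = M := by
  ext a
  simp only [mem_filter, mem_union, not_le]
  constructor
  · rintro ⟨h | h, hlt⟩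
    · exact absurd (mem_Icc.mp (hS h)).2 (not_le.mpr hlt)
    · exact h
  · intro h
    exact ⟨Or.inr h, lt_of_mem_markers (hM h)⟩

lemma eq_of_union_eq {n : ℕ} {S1 S2 M1 M2 : Finset ℕ}
    (hS1 : S1 ⊆ Finset.Icc 1 n) (hS2 : S2 ⊆ Finset.Icc 1 n)
    (hM1 : M1 ⊆ markers n) (hM2 : M2 ⊆ markers n)
    (h : S1 ∪ M1 = S2 ∪ M2) : S1 = S2 ∧ M1 = M2 := by
  constructor
  · rw [← split_left hS1 hM1, ← split_left hS2 hM2, h]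
  · rw [← split_right hS1 hM1, ← split_right hS2 hM2, h]

lemma Ffam_disj (k n : ℕ) : ∀ M1 ∈ (markers n).powerset, ∀ M2 ∈ (markers n).powerset, M1 ≠ M2 →
    Disjoint ((Gfam k n M1).image (fun S => S ∪ M1)) ((Gfam k n M2).image (fun S => S ∪ M2)) := by
  intro M1 hM1 M2 hM2 hne
  rw [Finset.disjoint_left]
  intro T hT1 hT2
  obtain ⟨S1, hS1, rfl⟩ := mem_image.mp hT1
  obtain ⟨S2, hS2, hEq⟩ := mem_image.mp hT2
  exact hne ((eq_of_union_eq (subset_of_mem_Gfam hS2) (subset_of_mem_Gfam hS1)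
    (mem_powerset.mp hM2) (mem_powerset.mp hM1) hEq).2).symm

lemma injOn_union (k n : ℕ) (M : Finset ℕ) (hM : M ⊆ markers n) :
    Set.InjOn (fun S => S ∪ M) ↑(Gfam k n M) := by
  intro S1 h1 S2 h2 h
  exact (eq_of_union_eq (subset_of_mem_Gfam h1) (subset_of_mem_Gfam h2) hM hM h).1

lemma card_Ffam (k n : ℕ) :
    (Ffam k n).card = ∑ M ∈ (markers n).powerset, (Gfam k n M).card := by
  rw [Ffam, Finset.card_biUnion (Ffam_disj k n)]
  exact Finset.sum_congr rfl fun M hM =>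
    Finset.card_image_of_injOn (injOn_union k n M (mem_powerset.mp hM))

lemma card_Ffam_filter (k n x : ℕ) (hx : x ∈ Finset.Icc 1 n) :
    ((Ffam k n).filter (fun S => x ∈ S)).card
      = ∑ M ∈ (markers n).powerset, ((Gfam k n M).filter (fun S => x ∈ S)).card := by
  rw [Ffam, Finset.filter_biUnion]
  rw [Finset.card_biUnion (fun M1 h1 M2 h2 hne =>
    Finset.disjoint_filter_filter (Ffam_disj k n M1 h1 M2 h2 hne))]
  refine Finset.sum_congr rfl fun M hM => ?_
  rw [Finset.filter_image]
  rw [Finset.card_image_of_injOn ((injOn_union k n M (mem_powerset.mp hM)).mono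
    (Finset.filter_subset _ _))]
  congr 1
  refine Finset.filter_congr fun S hS => ?_
  simp only [mem_union]
  constructor
  · rintro (h | h)
    · exact h
    · exact absurd (mem_Icc.mp hx).2 (not_le.mpr (lt_of_mem_markers (mem_powerset.mp hM h)))
  · exact Or.inl

lemma sum_powerset_split (n : ℕ) (g : Finset ℕ → ℕ) (C : ℕ)
    (hC : ∀ M, M ⊆ markers n → 2 ≤ M.card → g M = C) :
    ∑ M ∈ (markers n).powerset, g M
      = (((markers n).powerset.filter (fun M => 2 ≤ M.card)).card * C
        + (g ∅ + ∑ y ∈ Finset.Icc 1 n, g {n + y})) := by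
  rw [← Finset.sum_filter_add_sum_filter_not ((markers n).powerset) (fun M => 2 ≤ M.card) g]
  congr 1
  · rw [Finset.sum_congr rfl (fun M hM => hC M (mem_powerset.mp (mem_filter.mp hM).1)
      (mem_filter.mp hM).2), Finset.sum_const, smul_eq_mul]
  · have hset : (markers n).powerset.filter (fun M => ¬ 2 ≤ M.card)
        = insert ∅ ((Finset.Icc 1 n).image (fun y => ({n + y} : Finset ℕ))) := by
      ext M
      simp only [mem_filter, mem_powerset, mem_insert, mem_image, not_le]
      constructor
      · rintro ⟨hsub, hlt⟩
        have : M.card = 0 ∨ M.card = 1 := by omega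
        rcases this with h0 | h1
        · exact Or.inl (Finset.card_eq_zero.mp h0)
        · obtain ⟨a, rfl⟩ := Finset.card_eq_one.mp h1
          have ha : a ∈ markers n := hsub (mem_singleton_self a)
          simp only [markers, mem_image, mem_Icc] at ha
          obtain ⟨y, hy, rfl⟩ := ha
          exact Or.inr ⟨y, mem_Icc.mpr hy, rfl⟩
      · rintro (rfl | ⟨y, hy, rfl⟩)
        · exact ⟨Finset.empty_subset _, by simp⟩
        · refine ⟨?_, by simp⟩
          intro a ha
          rw [Finset.mem_singleton] at ha
          subst ha
          exact mem_image.mpr ⟨y, hy, rfl⟩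
    have hninj : ∀ x ∈ Finset.Icc 1 n, ∀ y ∈ Finset.Icc 1 n,
        ({n + x} : Finset ℕ) = {n + y} → x = y := by
      intro a _ b _ h
      have := Finset.singleton_injective h
      omega
    rw [hset, Finset.sum_insert (by
      simp only [mem_image]
      rintro ⟨y, hy, h⟩
      exact Finset.singleton_ne_empty (n + y) h), Finset.sum_image hninj]



lemma half_powerset {α : Type*} [DecidableEq α] (s : Finset α) (x : α) (hx : x ∈ s) :
    2 * (s.powerset.filter (fun S => x ∈ S)).card = s.powerset.card := by
  have hsum := Finset.card_filter_add_card_filter_not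
    (s := s.powerset) (p := fun S => x ∈ S)
  have heq : (s.powerset.filter (fun S => x ∈ S)).card
      = (s.powerset.filter (fun S => ¬ x ∈ S)).card := by
    apply Finset.card_bij' (i := fun S _ => S.erase x) (j := fun S _ => insert x S)
      (hi := fun S hS => by
        rw [Finset.mem_filter, Finset.mem_powerset] at hS ⊢
        exact ⟨(Finset.erase_subset x S).trans hS.1, Finset.notMem_erase x S⟩)
      (hj := fun S hS => by
        rw [Finset.mem_filter, Finset.mem_powerset] at hS ⊢
        exact ⟨Finset.insert_subset hx hS.1, Finset.mem_insert_self x S⟩)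
    · intro S hS
      rw [Finset.mem_filter] at hS
      exact Finset.insert_erase hS.2
    · intro S hS
      rw [Finset.mem_filter] at hS
      exact Finset.erase_insert hS.2
  omega

lemma Gfam_multi (k n : ℕ) (M : Finset ℕ) (h2 : 2 ≤ M.card) :
    Gfam k n M = (Finset.Icc 1 n).powerset := by
  rw [Gfam]
  exact Finset.filter_true_of_mem (fun S _ => Or.inl h2)

lemma Ffam_rare (k n x : ℕ) (hx : x ∈ Finset.Icc 1 n)
    (hnum : 2 * (((Gfam k n ∅).filter (fun S => x ∈ S)).card
          + ∑ y ∈ Finset.Icc 1 n, ((Gfam k n {n + y}).filter (fun S => x ∈ S)).card)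
        < (Gfam k n ∅).card + ∑ y ∈ Finset.Icc 1 n, (Gfam k n {n + y}).card) :
    2 * ((Ffam k n).filter (fun S => x ∈ S)).card < (Ffam k n).card := by
  rw [card_Ffam, card_Ffam_filter k n x hx,
    sum_powerset_split n (fun M => (Gfam k n M).card) ((Finset.Icc 1 n).powerset.card)
      (fun M _ h2 => by simp only [Gfam_multi k n M h2]),
    sum_powerset_split n (fun M => ((Gfam k n M).filter (fun S => x ∈ S)).card)
      (((Finset.Icc 1 n).powerset.filter (fun S => x ∈ S)).card)
      (fun M _ h2 => by simp only [Gfam_multi k n M h2])]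
  set R := ((markers n).powerset.filter (fun M => 2 ≤ M.card)).card with hR
  set Px := ((Finset.Icc 1 n).powerset.filter (fun S => x ∈ S)).card with hPx
  set P := (Finset.Icc 1 n).powerset.card with hP
  set a := ((Gfam k n ∅).filter (fun S => x ∈ S)).card
  set b := ∑ y ∈ Finset.Icc 1 n, ((Gfam k n {n + y}).filter (fun S => x ∈ S)).card
  set A := (Gfam k n ∅).card
  set B := ∑ y ∈ Finset.Icc 1 n, (Gfam k n {n + y}).card
  have hhalf : 2 * Px = P := half_powerset (Finset.Icc 1 n) x hx
  calc 2 * (R * Px + (a + b)) = R * (2 * Px) + 2 * (a + b) := by ring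
    _ = R * P + 2 * (a + b) := by rw [hhalf]
    _ < R * P + (A + B) := Nat.add_lt_add_left hnum _

lemma unionClosed_Ffam (k n : ℕ) (hkn : k ≤ n) : UnionClosed (Ffam k n) := by
  constructor
  · refine ⟨Finset.Icc 1 n, Finset.mem_biUnion.mpr ⟨∅, Finset.mem_powerset.mpr
      (Finset.empty_subset _), Finset.mem_image.mpr ⟨Finset.Icc 1 n, ?_, Finset.union_empty _⟩⟩⟩
    rw [Gfam, Finset.mem_filter, Finset.mem_powerset]
    refine ⟨Finset.Subset.refl _, Or.inr (Or.inl ?_)⟩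
    rw [Nat.card_Icc]
    omega
  · intro T1 hT1 T2 hT2
    obtain ⟨M1, hM1, hT1'⟩ := Finset.mem_biUnion.mp hT1
    obtain ⟨S1, hS1, rfl⟩ := Finset.mem_image.mp hT1'
    obtain ⟨M2, hM2, hT2'⟩ := Finset.mem_biUnion.mp hT2
    obtain ⟨S2, hS2, rfl⟩ := Finset.mem_image.mp hT2'
    rw [Finset.mem_powerset] at hM1 hM2
    have hgoal : (S1 ∪ M1) ∪ (S2 ∪ M2) = (S1 ∪ S2) ∪ (M1 ∪ M2) :=
      sup_sup_sup_comm S1 M1 S2 M2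
    rw [hgoal]
    refine Finset.mem_biUnion.mpr ⟨M1 ∪ M2, Finset.mem_powerset.mpr
      (Finset.union_subset hM1 hM2), Finset.mem_image.mpr ⟨S1 ∪ S2, ?_, rfl⟩⟩
    rw [Gfam, Finset.mem_filter, Finset.mem_powerset] at hS1 hS2 ⊢
    refine ⟨Finset.union_subset hS1.1 hS2.1, ?_⟩
    rcases hS1.2 with h | h | ⟨hne, hav⟩
    · exact Or.inl (h.trans (Finset.card_le_card Finset.subset_union_left))
    · exact Or.inr (Or.inl (h.trans (Finset.card_le_card Finset.subset_union_left)))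
    rcases hS2.2 with h2 | h2 | ⟨hne2, hav2⟩
    · exact Or.inl (h2.trans (Finset.card_le_card Finset.subset_union_right))
    · exact Or.inr (Or.inl (h2.trans (Finset.card_le_card Finset.subset_union_right)))
    by_cases hc : 2 ≤ (M1 ∪ M2).card
    · exact Or.inl hc
    · have hle : (M1 ∪ M2).card ≤ 1 := by omega
      have e1 : M1 = M1 ∪ M2 := Finset.eq_of_subset_of_card_le Finset.subset_union_left
        (hle.trans hne)
      have e2 : M2 = M1 ∪ M2 := Finset.eq_of_subset_of_card_le Finset.subset_union_right
        (hle.trans hne2)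
      refine Or.inr (Or.inr ⟨hne.trans (Finset.card_le_card Finset.subset_union_left), ?_⟩)
      intro a ha
      have ha1 : a ∈ M1 := by rw [e1]; exact ha
      have ha2 : a ∈ M2 := by rw [e2]; exact ha
      simp only [Finset.mem_union, not_or]
      exact ⟨hav a ha1, hav2 a ha2⟩

lemma kfamily_subset_Ffam (k n : ℕ) {A : Finset (Finset ℕ)}
    (hA : ∀ S ∈ A, S.card = k ∧ S ⊆ Finset.Icc 1 n) : A ⊆ Ffam k n := by
  intro S hS
  refine Finset.mem_biUnion.mpr ⟨∅, Finset.mem_powerset.mpr (Finset.empty_subset _),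
    Finset.mem_image.mpr ⟨S, ?_, Finset.union_empty _⟩⟩
  rw [Gfam, Finset.mem_filter, Finset.mem_powerset]
  exact ⟨(hA S hS).2, Or.inr (Or.inl (le_of_eq (hA S hS).1.symm))⟩

lemma nonFC (k n : ℕ) (hkn : k ≤ n)
    (hnum : ∀ x ∈ Finset.Icc 1 n,
      2 * (((Gfam k n ∅).filter (fun S => x ∈ S)).card
          + ∑ y ∈ Finset.Icc 1 n, ((Gfam k n {n + y}).filter (fun S => x ∈ S)).card)
        < (Gfam k n ∅).card + ∑ y ∈ Finset.Icc 1 n, (Gfam k n {n + y}).card) :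
    ∀ A : Finset (Finset ℕ), IsKFamily k n A → ¬ IsFC A := by
  rintro A ⟨hA, hU⟩ hFC
  obtain ⟨x, hx, hcard⟩ := hFC (Ffam k n) (unionClosed_Ffam k n hkn) (kfamily_subset_Ffam k n hA)
  have hx' : x ∈ Finset.Icc 1 n := by rw [← hU]; exact hx
  exact absurd hcard (not_le.mpr (Ffam_rare k n x hx' (hnum x hx')))

lemma isKFamily_powersetCard (k n : ℕ) (hk1 : 1 ≤ k) (hkn : k ≤ n) :
    IsKFamily k n ((Finset.Icc 1 n).powersetCard k) := by
  constructor
  · intro S hS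
    rw [Finset.mem_powersetCard] at hS
    exact ⟨hS.2, hS.1⟩
  · apply Finset.Subset.antisymm
    · intro a ha
      rw [famUniverse, Finset.mem_sup] at ha
      obtain ⟨S, hS, haS⟩ := ha
      exact (Finset.mem_powersetCard.mp hS).1 haS
    · intro x hx
      have hcard : k - 1 ≤ ((Finset.Icc 1 n).erase x).card := by
        rw [Finset.card_erase_of_mem hx, Nat.card_Icc]
        omega
      obtain ⟨t, hts, htc⟩ := Finset.exists_subset_card_eq hcard
      have hxt : x ∉ t := fun h => Finset.notMem_erase x _ (hts h)
      refine Finset.mem_sup.mpr ⟨insert x t, ?_, Finset.mem_insert_self x t⟩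
      rw [Finset.mem_powersetCard]
      constructor
      · intro a ha
        rcases Finset.mem_insert.mp ha with rfl | h
        · exact hx
        · exact (Finset.erase_subset x _) (hts h)
      · rw [Finset.card_insert_of_notMem hxt, htc]
        omega


set_option maxRecDepth 1000000 in
set_option maxHeartbeats 40000000 in
lemma hnum56 : ∀ x ∈ Finset.Icc 1 6,
    2 * (((Gfam 5 6 ∅).filter (fun S => x ∈ S)).card
        + ∑ y ∈ Finset.Icc 1 6, ((Gfam 5 6 {6 + y}).filter (fun S => x ∈ S)).card) ≤ 234 := by
  decide

set_option maxRecDepth 1000000 in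
set_option maxHeartbeats 40000000 in
lemma hr56 : (Gfam 5 6 ∅).card + ∑ y ∈ Finset.Icc 1 6, (Gfam 5 6 {6 + y}).card = 235 := by
  decide

set_option maxRecDepth 1000000 in
set_option maxHeartbeats 40000000 in
lemma hnum67 : ∀ x ∈ Finset.Icc 1 7,
    2 * (((Gfam 6 7 ∅).filter (fun S => x ∈ S)).card
        + ∑ y ∈ Finset.Icc 1 7, ((Gfam 6 7 {7 + y}).filter (fun S => x ∈ S)).card) ≤ 484 := by
  decide

set_option maxRecDepth 1000000 in
set_option maxHeartbeats 40000000 in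
lemma hr67 : (Gfam 6 7 ∅).card + ∑ y ∈ Finset.Icc 1 7, (Gfam 6 7 {7 + y}).card = 505 := by
  decide

set_option maxRecDepth 1000000 in
set_option maxHeartbeats 40000000 in
lemma hnum78 : ∀ x ∈ Finset.Icc 1 8,
    2 * (((Gfam 7 8 ∅).filter (fun S => x ∈ S)).card
        + ∑ y ∈ Finset.Icc 1 8, ((Gfam 7 8 {8 + y}).filter (fun S => x ∈ S)).card) ≤ 1026 := by
  decide

set_option maxRecDepth 1000000 in
set_option maxHeartbeats 40000000 in
lemma hr78 : (Gfam 7 8 ∅).card + ∑ y ∈ Finset.Icc 1 8, (Gfam 7 8 {8 + y}).card = 1097 := by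
  decide

set_option maxRecDepth 1000000 in
set_option maxHeartbeats 40000000 in
lemma hnum79 : ∀ x ∈ Finset.Icc 1 9,
    2 * (((Gfam 7 9 ∅).filter (fun S => x ∈ S)).card
        + ∑ y ∈ Finset.Icc 1 9, ((Gfam 7 9 {9 + y}).filter (fun S => x ∈ S)).card) ≤ 2660 := by
  decide

set_option maxRecDepth 1000000 in
set_option maxHeartbeats 40000000 in
lemma hr79 : (Gfam 7 9 ∅).card + ∑ y ∈ Finset.Icc 1 9, (Gfam 7 9 {9 + y}).card = 2683 := by
  decide

lemma case56 : ∀ A : Finset (Finset ℕ), IsKFamily 5 6 A → ¬ IsFC A := by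
  apply nonFC 5 6 (by norm_num)
  intro x hx
  have h1 := hnum56 x hx
  have h2 := hr56
  omega

lemma case67 : ∀ A : Finset (Finset ℕ), IsKFamily 6 7 A → ¬ IsFC A := by
  apply nonFC 6 7 (by norm_num)
  intro x hx
  have h1 := hnum67 x hx
  have h2 := hr67
  omega

lemma case78 : ∀ A : Finset (Finset ℕ), IsKFamily 7 8 A → ¬ IsFC A := by
  apply nonFC 7 8 (by norm_num)
  intro x hx
  have h1 := hnum78 x hx
  have h2 := hr78
  omega

lemma case79 : ∀ A : Finset (Finset ℕ), IsKFamily 7 9 A → ¬ IsFC A := by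
  apply nonFC 7 9 (by norm_num)
  intro x hx
  have h1 := hnum79 x hx
  have h2 := hr79
  omega

end FCaux

/-- For (k, n) ∈ {(5, 6), (6, 7), (7, 8), (7, 9)}, the family of all k-element
subsets of {1, …, n} is Non-FC; consequently no family of distinct k-element
subsets of [n] with universe [n] (of any size) is FC, so FC(k, n) is undefined. -/
theorem FC_undefined :
    ∀ p ∈ [(5, 6), (6, 7), (7, 8), (7, 9)],
      ¬ IsFC ((Finset.Icc 1 p.2).powersetCard p.1) ∧
      ∀ A : Finset (Finset ℕ), IsKFamily p.1 p.2 A → ¬ IsFC A := by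
  intro p hp
  simp only [List.mem_cons, List.not_mem_nil, or_false] at hp
  rcases hp with rfl | rfl | rfl | rfl
  · exact ⟨FCaux.case56 _ (FCaux.isKFamily_powersetCard 5 6 (by norm_num) (by norm_num)),
      FCaux.case56⟩
  · exact ⟨FCaux.case67 _ (FCaux.isKFamily_powersetCard 6 7 (by norm_num) (by norm_num)),
      FCaux.case67⟩
  · exact ⟨FCaux.case78 _ (FCaux.isKFamily_powersetCard 7 8 (by norm_num) (by norm_num)),
      FCaux.case78⟩
  · exact ⟨FCaux.case79 _ (FCaux.isKFamily_powersetCard 7 9 (by norm_num) (by norm_num)),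
      FCaux.case79⟩
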